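/- arXiv:2402.01198 — 3 statements merged into one kernel-verified Lean document; each statement's English description precedes it below -/
import Mathlib

section
/- For every odd integer N = 2n+1 and every real t with 0 < |t| ≤ 1/2, the second derivative of the normalized Dirichlet kernel satisfies |D_N''(t)| ≤ 5 N |t|^{-1}. -/
open scoped Real BigOperators
open Matrix

noncomputable section

/-- Normalized Dirichlet kernel of order `N = 2n+1`:
`D_N(t) = (1/N) ∑_{k=-n}^{n} e^{-2πi k t}`. -/
def dirichletKer (n : ℕ) (t : ℝ) : ℂ :=
  (1 / (2 * (n : ℂ) + 1)) * ∑ k ∈ Finset.Icc (-(n : ℤ)) (n : ℤ),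
    Complex.exp (-(2 * (Real.pi : ℂ) * Complex.I * (k : ℂ) * (t : ℂ)))

/-- `v₀(τ) ∈ ℂ^N`, entries `(1/√N) e^{2πi k τ}`, `k = -n, …, n`. -/
def v0 (n : ℕ) (τ : ℝ) : Fin (2 * n + 1) → ℂ := fun i =>
  ((1 / Real.sqrt (2 * n + 1) : ℝ) : ℂ) *
    Complex.exp (2 * (Real.pi : ℂ) * Complex.I * (((i : ℤ) - (n : ℤ) : ℤ) : ℂ) * (τ : ℂ))

/-- `v₁(τ) ∈ ℂ^N`, entries `(1/√N)(2πi k) e^{2πi k τ}`, `k = -n, …, n`. -/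
def v1 (n : ℕ) (τ : ℝ) : Fin (2 * n + 1) → ℂ := fun i =>
  ((1 / Real.sqrt (2 * n + 1) : ℝ) : ℂ) *
    (2 * (Real.pi : ℂ) * Complex.I * (((i : ℤ) - (n : ℤ) : ℤ) : ℂ)) *
    Complex.exp (2 * (Real.pi : ℂ) * Complex.I * (((i : ℤ) - (n : ℤ) : ℤ) : ℂ) * (τ : ℂ))

/-- `V₀(τ) ∈ ℂ^{N×L}` with columns `v₀(τ₁), …, v₀(τ_L)`. -/
def V0mat (n : ℕ) {L : ℕ} (τ : Fin L → ℝ) : Matrix (Fin (2 * n + 1)) (Fin L) ℂ :=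
  Matrix.of fun i j => v0 n (τ j) i

/-- `V₁(τ) ∈ ℂ^{N×L}` with columns `v₁(τ₁), …, v₁(τ_L)`. -/
def V1mat (n : ℕ) {L : ℕ} (τ : Fin L → ℝ) : Matrix (Fin (2 * n + 1)) (Fin L) ℂ :=
  Matrix.of fun i j => v1 n (τ j) i

/-- Wrap-around distance `inf_{j ∈ ℤ} |s - t + j|`. -/
def wrapDist (s t : ℝ) : ℝ := ⨅ j : ℤ, |s - t + (j : ℝ)|

/-- Minimal wrap-around separation between distinct entries of `τ`. -/
def minSep {L : ℕ} (τ : Fin L → ℝ) : ℝ :=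
  ⨅ q : {q : Fin L × Fin L // q.1 ≠ q.2}, wrapDist (τ q.val.1) (τ q.val.2)

/-- `G_p ∈ ℂ^{L×L}` with entries
`D_N^{(p)}(τ_i - τ_j) - D_N^{(p)}(τ̃_i - τ_j) + D_N^{(p)}(τ̃_i - τ̃_j) - D_N^{(p)}(τ_i - τ̃_j)`. -/
def Gmat (n p : ℕ) {L : ℕ} (τ τ' : Fin L → ℝ) : Matrix (Fin L) (Fin L) ℂ :=
  Matrix.of fun i j =>
    iteratedDeriv p (dirichletKer n) (τ i - τ j) -
    iteratedDeriv p (dirichletKer n) (τ' i - τ j) +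
    iteratedDeriv p (dirichletKer n) (τ' i - τ' j) -
    iteratedDeriv p (dirichletKer n) (τ i - τ' j)

/-! ### Auxiliary machinery for the second-derivative bound -/

section DirichletDeriv2Aux

/-- The real cosine sum `∑_{k=0}^{n} k² cos(2πkt)`. -/
def dkS (n : ℕ) (t : ℝ) : ℝ := ∑ k ∈ Finset.range (n+1), (k:ℝ)^2 * Real.cos (2*Real.pi*k*t)

lemma dk_sum_sq_formula (n : ℕ) : ∑ k ∈ Finset.range (n+1), (k:ℝ)^2
    = n*(n+1)*(2*n+1)/6 := by
  induction n with
  | zero => simp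
  | succ m ih => rw [Finset.sum_range_succ, ih]; push_cast; ring

lemma dkS_triv (n : ℕ) (t : ℝ) : |dkS n t| ≤ (n:ℝ)*(n+1)*(2*n+1)/6 := by
  calc |dkS n t| ≤ ∑ k ∈ Finset.range (n+1), |(k:ℝ)^2 * Real.cos (2*Real.pi*k*t)| :=
        Finset.abs_sum_le_sum_abs _ _
    _ ≤ ∑ k ∈ Finset.range (n+1), (k:ℝ)^2 := by
        apply Finset.sum_le_sum
        intro k _
        rw [abs_mul, abs_pow]
        calc |(k:ℝ)|^2 * |Real.cos (2*Real.pi*k*t)| ≤ |(k:ℝ)|^2 * 1 := by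
              apply mul_le_mul_of_nonneg_left (Real.abs_cos_le_one _) (by positivity)
          _ = (k:ℝ)^2 := by rw [mul_one, sq_abs]
    _ = (n:ℝ)*(n+1)*(2*n+1)/6 := dk_sum_sq_formula n

lemma dkS_even (n : ℕ) (t : ℝ) : dkS n t = dkS n |t| := by
  rcases abs_cases t with ⟨h, _⟩ | ⟨h, _⟩
  · rw [h]
  · rw [h]
    unfold dkS
    apply Finset.sum_congr rfl
    intro k _
    congr 1
    rw [show 2*Real.pi*(k:ℝ)*(-t) = -(2*Real.pi*(k:ℝ)*t) by ring, Real.cos_neg]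

lemma dkS_identity (n : ℕ) (t : ℝ) :
    4 * Real.sin (Real.pi*t)^3 * dkS n t
      = Real.cos (Real.pi*t) * (2*(n:ℝ)^2*Real.sin (Real.pi*t)^2 - 1) * Real.sin (2*Real.pi*n*t)
        + 2*Real.sin (Real.pi*t) * ((n:ℝ)^2*Real.sin (Real.pi*t)^2 + n)
          * Real.cos (2*Real.pi*n*t) := by
  induction n with
  | zero => simp [dkS]
  | succ m ih =>
    have hS : dkS (m+1) t = dkS m t + ((m:ℝ)+1)^2 * Real.cos (2*Real.pi*((m:ℝ)+1)*t) := by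
      unfold dkS; rw [Finset.sum_range_succ]; push_cast; ring
    have ha : 2*Real.pi*((m:ℝ)+1)*t = 2*Real.pi*(m:ℝ)*t + 2*(Real.pi*t) := by ring
    push_cast
    rw [hS, ha, Real.sin_add, Real.cos_add, Real.sin_two_mul, Real.cos_two_mul]
    set s := Real.sin (Real.pi*t)
    set c := Real.cos (Real.pi*t)
    set P := Real.sin (2*Real.pi*(m:ℝ)*t)
    set Q := Real.cos (2*Real.pi*(m:ℝ)*t)
    have hpy : s^2 + c^2 = 1 := Real.sin_sq_add_cos_sq (Real.pi*t)
    linear_combination ih + (2*c*P - 2*s*Q - 4*s*Q*(m:ℝ) - 4*s^2*c*P - 8*s^2*c*P*(m:ℝ)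
      - 4*s^2*c*P*(m:ℝ)^2) * hpy

lemma dkS_sq_bound (n : ℕ) (t : ℝ) :
    16 * Real.sin (Real.pi*t)^6 * (dkS n t)^2
      ≤ (1 - Real.sin (Real.pi*t)^2) * (2*(n:ℝ)^2*Real.sin (Real.pi*t)^2 - 1)^2
        + 4*Real.sin (Real.pi*t)^2 * ((n:ℝ)^2*Real.sin (Real.pi*t)^2 + n)^2 := by
  have hI := dkS_identity n t
  set s := Real.sin (Real.pi*t)
  set c := Real.cos (Real.pi*t)
  set P := Real.sin (2*Real.pi*n*t)
  set Q := Real.cos (2*Real.pi*n*t)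
  set X := c * (2*(n:ℝ)^2*s^2 - 1)
  set Y := 2*s*((n:ℝ)^2*s^2 + n)
  have hpy : P^2 + Q^2 = 1 := Real.sin_sq_add_cos_sq _
  have hc : c^2 = 1 - s^2 := Real.cos_sq' _
  have h2 : (4*s^3*(dkS n t))^2 = (X*P + Y*Q)^2 := by rw [hI]
  have key : (X*P + Y*Q)^2 ≤ X^2 + Y^2 := by nlinarith [sq_nonneg (X*Q - Y*P)]
  have hXY : X^2 + Y^2 = (1-s^2)*(2*(n:ℝ)^2*s^2-1)^2 + 4*s^2*((n:ℝ)^2*s^2+n)^2 := by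
    simp only [X, Y]; linear_combination (2*(n:ℝ)^2*s^2-1)^2 * hc
  nlinarith [h2, key, hXY]

lemma dk_poly_outer (x σ : ℝ) (hx : 1 ≤ x) (h1 : 1/2 ≤ σ) (h2 : σ ≤ 1) :
    4*((1-σ)*(2*x^2*σ-1)^2 + 4*σ*(x^2*σ+x)^2) ≤ σ^2*(2*x+1)^4 := by
  nlinarith [sq_nonneg (x-1), sq_nonneg (σ-1), sq_nonneg (2*σ-1),
    mul_nonneg (sub_nonneg.2 h2) (sub_nonneg.2 h1),
    sq_nonneg (x*σ-1), sq_nonneg (x*σ-x), sq_nonneg x,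
    mul_pos (lt_of_lt_of_le one_pos hx) (lt_of_lt_of_le (by norm_num) h1)]

lemma dk_poly_middle (x σ : ℝ) (hx : 1 ≤ x) (hlo : 3.9 ≤ σ*(x+1)^2) (h2 : σ ≤ 1) :
    2.28*((1-σ)*(2*x^2*σ-1)^2 + 4*σ*(x^2*σ+x)^2) ≤ σ^2*(2*x+1)^4 := by
  nlinarith [sq_nonneg (x-1), sq_nonneg (σ-1), mul_nonneg (sub_nonneg.2 h2) (sq_nonneg (x+1)),
    sq_nonneg (σ*(x+1)^2 - 3.9), mul_pos (lt_of_lt_of_le one_pos hx) (lt_of_lt_of_le one_pos hx),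
    sq_nonneg (x*σ-1)]

set_option maxHeartbeats 1000000 in
lemma dkS_bound (n : ℕ) (τ : ℝ) (h0 : 0 < τ) (hhalf : τ ≤ 1/2) :
    16 * τ * |dkS n τ| ≤ (2*(n:ℝ)+1)^2 := by
  rcases Nat.eq_zero_or_pos n with rfl | hn
  · have h : dkS 0 τ = 0 := by simp [dkS]
    rw [h]
    norm_num
  have hπ := Real.pi_pos
  have hx : (1:ℝ) ≤ (n:ℝ) := by exact_mod_cast hn
  set x : ℝ := (n:ℝ) with hxdef
  set s := Real.sin (Real.pi*τ) with hsdef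
  have hs2 : 2*τ ≤ s := by
    have h := Real.mul_le_sin (x := Real.pi*τ) (by positivity) (by nlinarith)
    have he : 2/Real.pi*(Real.pi*τ) = 2*τ := by field_simp
    rw [he] at h
    exact h
  have hs0 : 0 < s := lt_of_lt_of_le (by linarith) hs2
  have hs1 : s^2 ≤ 1 := Real.sin_sq_le_one _
  have hQ := dkS_sq_bound n τ
  rw [← hsdef, ← hxdef] at hQ
  have hQ0 : 0 ≤ (1-s^2)*(2*x^2*s^2-1)^2 + 4*s^2*(x^2*s^2+x)^2 := by
    have h1 := sq_nonneg (2*x^2*s^2-1)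
    have h2 := sq_nonneg (x^2*s^2+x)
    nlinarith
  by_cases hA : 8*x*(x+1)*τ ≤ 3*(2*x+1)
  · -- trivial bound region
    have htriv := dkS_triv n τ
    rw [← hxdef] at htriv
    have hm := mul_le_mul_of_nonneg_left htriv (le_of_lt (by positivity : (0:ℝ) < 16*τ))
    nlinarith [hm, mul_le_mul_of_nonneg_right hA (by positivity : (0:ℝ) ≤ 2*x+1)]
  · push_neg at hA
    have key : 16*τ^2*((1-s^2)*(2*x^2*s^2-1)^2 + 4*s^2*(x^2*s^2+x)^2)
        ≤ s^6*(2*x+1)^4 := by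
      by_cases hB : τ ≤ 1/4
      · -- middle region
        have hπτ : Real.pi*τ ≤ 1 := by nlinarith [Real.pi_lt_d2]
        have hcube : Real.pi*τ - (Real.pi*τ)^3/4 < Real.sin (Real.pi*τ) := by
          have := Real.sin_gt_sub_cube (x := Real.pi*τ) (by positivity)
          have : 0 ≤ (Real.pi*τ)^3 := by positivity
          linarith
        have h265 : 2.65*τ ≤ s := by
          have e1 : 3.141592*τ ≤ Real.pi*τ := by nlinarith [Real.pi_gt_d6]
          have hu2 : Real.pi*τ ≤ 0.7875 := by nlinarith [Real.pi_lt_d2]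
          have hu3 : (Real.pi*τ)^3 ≤ 0.7875^2*(Real.pi*τ) := by
            nlinarith [mul_nonneg (mul_nonneg (mul_pos hπ h0).le (sub_nonneg.2 hu2))
              (by positivity : (0:ℝ) ≤ Real.pi*τ + 0.7875)]
          have e3 : 0.7875^2*(Real.pi*τ)/4 ≤ 0.4884*τ := by nlinarith [Real.pi_lt_d2]
          rw [hsdef]
          linarith
        have hτs : 16*τ^2 ≤ 2.28*s^2 := by nlinarith
        have hσlo : 3.9 ≤ s^2*(x+1)^2 := by
          have m1 : 2.65*τ*((x+1)*(8*x)) ≤ s*((x+1)*(8*x)) :=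
            mul_le_mul_of_nonneg_right h265 (by positivity)
          have g2 : 1.9875*(8*x) < s*(x+1)*(8*x) := by nlinarith [m1, hA]
          have g1 : 1.9875 < s*(x+1) :=
            lt_of_mul_lt_mul_right (by linarith) (by positivity : (0:ℝ) ≤ 8*x)
          nlinarith [g1, mul_pos hs0 (show (0:ℝ) < x+1 by linarith)]
        have hP1 := dk_poly_middle x (s^2) hx hσlo hs1
        calc 16*τ^2*((1-s^2)*(2*x^2*s^2-1)^2 + 4*s^2*(x^2*s^2+x)^2)
            ≤ 2.28*s^2*((1-s^2)*(2*x^2*s^2-1)^2 + 4*s^2*(x^2*s^2+x)^2) :=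
              mul_le_mul_of_nonneg_right hτs hQ0
          _ = s^2*(2.28*((1-s^2)*(2*x^2*s^2-1)^2 + 4*s^2*(x^2*s^2+x)^2)) := by ring
          _ ≤ s^2*((s^2)^2*(2*x+1)^4) := mul_le_mul_of_nonneg_left hP1 (sq_nonneg s)
          _ = s^6*(2*x+1)^4 := by ring
      · -- outer region
        push_neg at hB
        have hσ : 1/2 ≤ s^2 := by
          have hmono : Real.sin (Real.pi/4) < s := by
            rw [hsdef]
            apply Real.sin_lt_sin_of_lt_of_le_pi_div_two (by nlinarith) (by nlinarith)
            nlinarith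
          rw [Real.sin_pi_div_four] at hmono
          nlinarith [Real.sq_sqrt (by norm_num : (0:ℝ) ≤ 2), Real.sqrt_nonneg 2]
        have hτs : 16*τ^2 ≤ 4*s^2 := by nlinarith
        have hP2 := dk_poly_outer x (s^2) hx hσ hs1
        calc 16*τ^2*((1-s^2)*(2*x^2*s^2-1)^2 + 4*s^2*(x^2*s^2+x)^2)
            ≤ 4*s^2*((1-s^2)*(2*x^2*s^2-1)^2 + 4*s^2*(x^2*s^2+x)^2) :=
              mul_le_mul_of_nonneg_right hτs hQ0
          _ = s^2*(4*((1-s^2)*(2*x^2*s^2-1)^2 + 4*s^2*(x^2*s^2+x)^2)) := by ring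
          _ ≤ s^2*((s^2)^2*(2*x+1)^4) := mul_le_mul_of_nonneg_left hP2 (sq_nonneg s)
          _ = s^6*(2*x+1)^4 := by ring
    -- combine
    have hs6 : (0:ℝ) < s^6 := by positivity
    have c1 : 16*τ^2*(16*s^6*(dkS n τ)^2) ≤ 16*τ^2*((1-s^2)*(2*x^2*s^2-1)^2
        + 4*s^2*(x^2*s^2+x)^2) := mul_le_mul_of_nonneg_left hQ (by positivity)
    have c2 : 256*τ^2*(dkS n τ)^2*s^6 ≤ (2*x+1)^4*s^6 := by nlinarith [c1, key]
    have c3 : 256*τ^2*(dkS n τ)^2 ≤ (2*x+1)^4 :=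
      le_of_mul_le_mul_right c2 hs6
    have hS2 : (16*τ*|dkS n τ|)^2 ≤ ((2*x+1)^2)^2 := by
      calc (16*τ*|dkS n τ|)^2 = 256*τ^2*(dkS n τ)^2 := by
            rw [mul_pow, mul_pow, sq_abs]; ring
        _ ≤ (2*x+1)^4 := c3
        _ = ((2*x+1)^2)^2 := by ring
    exact le_of_pow_le_pow_left₀ two_ne_zero (sq_nonneg _) hS2

lemma dk_hasDerivAt_cexp_mul (a : ℂ) (t : ℝ) :
    HasDerivAt (fun x : ℝ => Complex.exp (a * x)) (a * Complex.exp (a * t)) t := by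
  have h : HasDerivAt (fun z : ℂ => Complex.exp (a * z)) (Complex.exp (a * t) * a) (t : ℂ) := by
    simpa using ((hasDerivAt_id ((t : ℝ) : ℂ)).const_mul a).cexp
  simpa [mul_comm] using h.comp_ofReal

lemma dk_hasDerivAt_aux (n : ℕ) (m : ℕ) (t : ℝ) :
    HasDerivAt (fun x : ℝ => (1 / (2 * (n : ℂ) + 1)) * ∑ k ∈ Finset.Icc (-(n : ℤ)) (n : ℤ),
      (-(2 * (Real.pi : ℂ) * Complex.I * (k : ℂ)))^m *
        Complex.exp (-(2 * (Real.pi : ℂ) * Complex.I * (k : ℂ)) * x))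
      ((1 / (2 * (n : ℂ) + 1)) * ∑ k ∈ Finset.Icc (-(n : ℤ)) (n : ℤ),
      (-(2 * (Real.pi : ℂ) * Complex.I * (k : ℂ)))^(m+1) *
        Complex.exp (-(2 * (Real.pi : ℂ) * Complex.I * (k : ℂ)) * t)) t := by
  apply HasDerivAt.const_mul
  apply HasDerivAt.fun_sum
  intro k _
  have := (dk_hasDerivAt_cexp_mul (-(2 * (Real.pi : ℂ) * Complex.I * (k : ℂ))) t).const_mul
    ((-(2 * (Real.pi : ℂ) * Complex.I * (k : ℂ)))^m)
  exact this.congr_deriv (by ring)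

lemma dk_iteratedDeriv_two (n : ℕ) (t : ℝ) :
    iteratedDeriv 2 (dirichletKer n) t = (1 / (2 * (n : ℂ) + 1)) *
      ∑ k ∈ Finset.Icc (-(n : ℤ)) (n : ℤ),
        (-(2 * (Real.pi : ℂ) * Complex.I * (k : ℂ)))^2 *
          Complex.exp (-(2 * (Real.pi : ℂ) * Complex.I * (k : ℂ)) * t) := by
  have h0 : dirichletKer n = fun x : ℝ => (1 / (2 * (n : ℂ) + 1)) *
      ∑ k ∈ Finset.Icc (-(n : ℤ)) (n : ℤ),
        (-(2 * (Real.pi : ℂ) * Complex.I * (k : ℂ)))^0 *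
          Complex.exp (-(2 * (Real.pi : ℂ) * Complex.I * (k : ℂ)) * x) := by
    funext x
    unfold dirichletKer
    congr 1
    apply Finset.sum_congr rfl
    intro k _
    rw [pow_zero, one_mul]
    ring_nf
  rw [iteratedDeriv_succ, iteratedDeriv_one, h0]
  have h1 : deriv (fun x : ℝ => (1 / (2 * (n : ℂ) + 1)) *
      ∑ k ∈ Finset.Icc (-(n : ℤ)) (n : ℤ),
        (-(2 * (Real.pi : ℂ) * Complex.I * (k : ℂ)))^0 *
          Complex.exp (-(2 * (Real.pi : ℂ) * Complex.I * (k : ℂ)) * x))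
      = (fun x : ℝ => (1 / (2 * (n : ℂ) + 1)) *
      ∑ k ∈ Finset.Icc (-(n : ℤ)) (n : ℤ),
        (-(2 * (Real.pi : ℂ) * Complex.I * (k : ℂ)))^1 *
          Complex.exp (-(2 * (Real.pi : ℂ) * Complex.I * (k : ℂ)) * x)) := by
    funext x
    exact (dk_hasDerivAt_aux n 0 x).deriv
  rw [h1]
  exact (dk_hasDerivAt_aux n 1 t).deriv

lemma dk_Icc_succ (n : ℕ) : Finset.Icc (-(n+1:ℤ)) (n+1:ℤ)
    = insert (-(n+1:ℤ)) (insert (n+1:ℤ) (Finset.Icc (-(n:ℤ)) (n:ℤ))) := by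
  ext k; simp only [Finset.mem_Icc, Finset.mem_insert]; omega

lemma dk_cexp_pair (x : ℝ) : Complex.exp (-(2*(Real.pi:ℂ)*Complex.I*(x:ℂ)))
    + Complex.exp (2*(Real.pi:ℂ)*Complex.I*(x:ℂ)) = ((2 * Real.cos (2*Real.pi*x) : ℝ) : ℂ) := by
  have h1 : (-(2*(Real.pi:ℂ)*Complex.I*(x:ℂ))) = ((-(2*Real.pi*x) : ℝ) : ℂ) * Complex.I := by
    push_cast; ring
  have h2 : (2*(Real.pi:ℂ)*Complex.I*(x:ℂ)) = ((2*Real.pi*x : ℝ) : ℂ) * Complex.I := by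
    push_cast; ring
  rw [h1, h2, Complex.exp_mul_I, Complex.exp_mul_I, ← Complex.ofReal_cos,
    ← Complex.ofReal_sin, ← Complex.ofReal_cos, ← Complex.ofReal_sin,
    Real.cos_neg, Real.sin_neg]
  push_cast
  ring

set_option maxHeartbeats 1000000 in
lemma dk_sum_exp_eq (n : ℕ) (t : ℝ) :
    ∑ k ∈ Finset.Icc (-(n:ℤ)) (n:ℤ), (k:ℂ)^2
        * Complex.exp (-(2*(Real.pi:ℂ)*Complex.I*(k:ℂ)*(t:ℂ)))
      = ((2 * dkS n t : ℝ) : ℂ) := by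
  induction n with
  | zero => simp [dkS]
  | succ m ih =>
    have h1 : ((m:ℤ)+1 : ℤ) ∉ Finset.Icc (-(m:ℤ)) (m:ℤ) := by
      simp only [Finset.mem_Icc]; omega
    have h2 : (-((m:ℤ)+1) : ℤ) ∉ insert ((m:ℤ)+1) (Finset.Icc (-(m:ℤ)) (m:ℤ)) := by
      simp only [Finset.mem_insert, Finset.mem_Icc]; omega
    have hIcc : Finset.Icc (-((m:ℕ)+1:ℤ)) ((m:ℕ)+1:ℤ)
        = insert (-((m:ℤ)+1)) (insert ((m:ℤ)+1) (Finset.Icc (-(m:ℤ)) (m:ℤ))) := dk_Icc_succ m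
    push_cast
    rw [hIcc, Finset.sum_insert h2, Finset.sum_insert h1, ih]
    have hpair := dk_cexp_pair (((m:ℝ)+1) * t)
    have e1 : (-(2*(Real.pi:ℂ)*Complex.I*((-((m:ℤ)+1) : ℤ):ℂ)*(t:ℂ)))
        = 2*(Real.pi:ℂ)*Complex.I*((((m:ℝ)+1)*t : ℝ):ℂ) := by push_cast; ring
    have e2 : (-(2*(Real.pi:ℂ)*Complex.I*((((m:ℤ)+1) : ℤ):ℂ)*(t:ℂ)))
        = -(2*(Real.pi:ℂ)*Complex.I*((((m:ℝ)+1)*t : ℝ):ℂ)) := by push_cast; ring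
    have hS : dkS (m+1) t = dkS m t + ((m:ℝ)+1)^2 * Real.cos (2*Real.pi*(((m:ℝ)+1))*t) := by
      unfold dkS
      rw [Finset.sum_range_succ]
      push_cast
      ring
    rw [hS]
    push_cast [e1, e2]
    rw [show (2*Real.pi*(((m:ℝ)+1)*t)) = 2*Real.pi*((m:ℝ)+1)*t by ring] at hpair
    have := congrArg (fun z => (((m:ℝ)+1:ℂ))^2 * z) hpair
    push_cast at this ⊢
    ring_nf at this ⊢
    linear_combination this

lemma dk_value (n : ℕ) (t : ℝ) :
    iteratedDeriv 2 (dirichletKer n) t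
      = (((-8)*Real.pi^2*dkS n t/(2*(n:ℝ)+1) : ℝ) : ℂ) := by
  rw [dk_iteratedDeriv_two]
  have hterm : ∀ k ∈ Finset.Icc (-(n:ℤ)) (n:ℤ),
      (-(2*(Real.pi:ℂ)*Complex.I*(k:ℂ)))^2
          * Complex.exp (-(2*(Real.pi:ℂ)*Complex.I*(k:ℂ)) * (t:ℂ))
        = ((-4)*(Real.pi:ℂ)^2) * ((k:ℂ)^2
          * Complex.exp (-(2*(Real.pi:ℂ)*Complex.I*(k:ℂ)*(t:ℂ)))) := by
    intro k _
    have harg : (-(2*(Real.pi:ℂ)*Complex.I*(k:ℂ))) * (t:ℂ)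
        = -(2*(Real.pi:ℂ)*Complex.I*(k:ℂ)*(t:ℂ)) := by ring
    rw [harg]
    have hI : (-(2*(Real.pi:ℂ)*Complex.I*(k:ℂ)))^2 = (-4)*(Real.pi:ℂ)^2*(k:ℂ)^2 := by
      linear_combination (4*(Real.pi:ℂ)^2*(k:ℂ)^2) * Complex.I_sq
    rw [hI]
    ring
  rw [Finset.sum_congr rfl hterm, ← Finset.mul_sum, dk_sum_exp_eq]
  have hne : (2*(n:ℂ)+1) ≠ 0 := by
    have h : (2*(n:ℂ)+1) = ((2*(n:ℝ)+1 : ℝ) : ℂ) := by push_cast; ring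
    rw [h]
    exact_mod_cast (by positivity : (2*(n:ℝ)+1) ≠ 0)
  have hco : (((-8)*Real.pi^2*dkS n t/(2*(n:ℝ)+1) : ℝ) : ℂ)
      = ((-8)*(Real.pi:ℂ)^2*((dkS n t : ℝ) : ℂ))/(2*(n:ℂ)+1) := by
    push_cast; ring
  rw [hco, one_div_mul_eq_div]
  congr 1
  push_cast
  ring

end DirichletDeriv2Aux

/-- `|D_N''(t)| ≤ 5 N |t|⁻¹` for `0 < |t| ≤ 1/2`, `N = 2n+1`. -/
theorem dirichlet_deriv2_bound (n : ℕ) (t : ℝ) (ht0 : 0 < |t|) (ht : |t| ≤ 1 / 2) :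
    ‖iteratedDeriv 2 (dirichletKer n) t‖ ≤ 5 * (2 * (n : ℝ) + 1) * |t|⁻¹ := by
  rw [dk_value, Complex.norm_real, Real.norm_eq_abs]
  have hD := dkS_bound n |t| ht0 ht
  have heven := dkS_even n t
  have hNpos : (0:ℝ) < 2*(n:ℝ)+1 := by positivity
  have habs : |(-8)*Real.pi^2*dkS n t/(2*(n:ℝ)+1)|
      = 8*Real.pi^2*(abs (dkS n (abs t)))/(2*(n:ℝ)+1) := by
    rw [abs_div, abs_of_pos hNpos,
      show ((-8)*Real.pi^2*dkS n t) = (-(8*Real.pi^2))*(dkS n t) by ring,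
      abs_mul, abs_neg, abs_of_pos (by positivity : (0:ℝ) < 8*Real.pi^2), heven]
  rw [habs, show 5*(2*(n:ℝ)+1)*|t|⁻¹ = 5*(2*(n:ℝ)+1)/|t| by rw [div_eq_mul_inv],
    div_le_div_iff₀ hNpos ht0]
  have hpi2 : Real.pi^2 ≤ 9.9225 := by nlinarith [Real.pi_lt_d2, Real.pi_pos]
  nlinarith [hD, hpi2, mul_nonneg (abs_nonneg (dkS n (abs t))) ht0.le,
    mul_le_mul_of_nonneg_left hD (by positivity : (0:ℝ) ≤ 2*(n:ℝ)+1), sq_nonneg (2*(n:ℝ)+1)]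
end
end

section
/- Let N = 2n+1 be odd, let τ = (τ_1,…,τ_L) and τ̃ = (τ̃_1,…,τ̃_L) be lists of reals, let δ ≥ 0, and assume the wrap-around distance between τ_ℓ and τ̃_ℓ is at most δ for every ℓ ∈ {1,…,L}. Then for each p ∈ {0,1,2} and all indices i, j, the entries of G_p satisfy |G_p(i,j)| ≤ 4 δ² · sup_{|ε| ≤ 2δ} |D_N^{(p+2)}(τ_i − τ_j + ε)|. -/
open scoped Real BigOperators
open Matrix

noncomputable section

lemma dirichlet_contDiff (n : ℕ) : ContDiff ℝ ⊤ (dirichletKer n) := by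
  unfold dirichletKer
  refine contDiff_const.mul (ContDiff.sum fun k _ => ?_)
  exact Complex.contDiff_exp.comp
    ((contDiff_const.mul Complex.ofRealCLM.contDiff).neg)

lemma dirichlet_periodic (n : ℕ) : Function.Periodic (dirichletKer n) 1 := by
  intro t
  unfold dirichletKer
  congr 1
  refine Finset.sum_congr rfl fun k _ => ?_
  have h : (-(2 * (Real.pi : ℂ) * Complex.I * (k : ℂ) * ((t + 1 : ℝ) : ℂ))) =
      -(2 * (Real.pi : ℂ) * Complex.I * (k : ℂ) * (t : ℂ)) +
        ((-k : ℤ) : ℂ) * (2 * (Real.pi : ℂ) * Complex.I) := by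
    push_cast; ring
  rw [h, Complex.exp_add, Complex.exp_int_mul_two_pi_mul_I, mul_one]

lemma periodic_deriv' {f : ℝ → ℂ} {c : ℝ} (h : Function.Periodic f c) :
    Function.Periodic (deriv f) c := by
  intro x
  have h2 : deriv (fun y => f (y + c)) x = deriv f (x + c) := deriv_comp_add_const f c x
  rw [← h2]
  congr 1
  funext y; exact h y

lemma dirichlet_iter_periodic (n q : ℕ) :
    Function.Periodic (iteratedDeriv q (dirichletKer n)) 1 := by
  induction q with
  | zero => simpa using dirichlet_periodic n
  | succ q ih => rw [iteratedDeriv_succ]; exact periodic_deriv' ih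

lemma wrap_exists {s t δ : ℝ} (h : wrapDist s t ≤ δ) : ∃ m : ℤ, |s - t + (m : ℝ)| ≤ δ := by
  refine ⟨-round (s - t), le_trans (le_of_eq ?_) h⟩
  have hb : BddBelow (Set.range fun j : ℤ => |s - t + (j : ℝ)|) := by
    refine ⟨0, fun x hx => ?_⟩
    rcases hx with ⟨j, rfl⟩; positivity
  apply le_antisymm
  · apply le_ciInf; intro m
    have := round_le (s - t) (-m)
    push_cast at this ⊢
    simpa [sub_eq_add_neg, sub_neg_eq_add] using this
  · have := ciInf_le hb (-round (s - t))
    simpa [wrapDist, sub_eq_add_neg] using this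

/-- if the wrap-around distance between `τ_ℓ` and `τ̃_ℓ` is at most `δ` for each
`ℓ`, then for `p ∈ {0,1,2}` the entries of `G_p` satisfy
`|G_p(i,j)| ≤ 4δ² sup_{|ε| ≤ 2δ} |D_N^{(p+2)}(τ_i − τ_j + ε)|`. -/
theorem Gmat_entry_bound (n L : ℕ) (p : ℕ) (hp : p ∈ ({0, 1, 2} : Set ℕ))
    (τ τ' : Fin L → ℝ) (δ : ℝ) (hδ : 0 ≤ δ)
    (hclose : ∀ ℓ : Fin L, wrapDist (τ ℓ) (τ' ℓ) ≤ δ) (i j : Fin L) :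
    ‖Gmat n p τ τ' i j‖ ≤
      4 * δ ^ 2 *
        ⨆ ε : {e : ℝ // |e| ≤ 2 * δ},
          ‖iteratedDeriv (p + 2) (dirichletKer n) (τ i - τ j + ε.1)‖ := by
  classical
  clear hp
  set D := dirichletKer n with hDdef
  have hD : ContDiff ℝ ⊤ D := dirichlet_contDiff n
  have hsm : ∀ q : ℕ, ContDiff ℝ (⊤ : ℕ∞) (iteratedDeriv q D) := by
    intro q
    rw [iteratedDeriv_eq_iterate]
    exact (hD.of_le le_top).iterate_deriv q
  have hdiff : ∀ q : ℕ, Differentiable ℝ (iteratedDeriv q D) :=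
    fun q => (hsm q).differentiable (by simp)
  have hshift : ∀ (q : ℕ) (y : ℝ) (m : ℤ), iteratedDeriv q D (y + (m : ℝ)) = iteratedDeriv q D y := by
    intro q y m
    have := (dirichlet_iter_periodic n q).int_mul m
    simpa using this y
  obtain ⟨mi, hmi⟩ := wrap_exists (hclose i)
  obtain ⟨mj, hmj⟩ := wrap_exists (hclose j)
  set x : ℝ := τ i - τ j with hxdef
  set a : ℝ := τ i - τ' i + (mi : ℝ) with hadef
  set b : ℝ := τ j - τ' j + (mj : ℝ) with hbdef
  have ha : |a| ≤ δ := hmi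
  have hb : |b| ≤ δ := hmj
  set f := iteratedDeriv p D with hfdef
  set f1 := iteratedDeriv (p + 1) D with hf1def
  set g := iteratedDeriv (p + 2) D with hgdef
  -- rewrite the entry
  have hentry : Gmat n p τ τ' i j = f x - f (x - a) + f (x - a + b) - f (x + b) := by
    have e1 : τ' i - τ j = (x - a) + (mi : ℝ) := by rw [hxdef, hadef]; ring
    have e2 : τ' i - τ' j = (x - a + b) + ((mi - mj : ℤ) : ℝ) := by
      rw [hxdef, hadef, hbdef]; push_cast; ring
    have e3 : τ i - τ' j = (x + b) + ((-mj : ℤ) : ℝ) := by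
      rw [hxdef, hbdef]; push_cast; ring
    show (iteratedDeriv p D (τ i - τ j) - iteratedDeriv p D (τ' i - τ j) +
      iteratedDeriv p D (τ' i - τ' j) - iteratedDeriv p D (τ i - τ' j)) = _
    rw [e1, e2, e3, hshift p _ mi, hshift p _ (mi - mj), hshift p _ (-mj)]
  set S : ℝ := ⨆ ε : {e : ℝ // |e| ≤ 2 * δ},
      ‖iteratedDeriv (p + 2) (dirichletKer n) (τ i - τ j + ε.1)‖ with hSdef
  -- boundedness of the sup
  have hbdd : BddAbove (Set.range fun ε : {e : ℝ // |e| ≤ 2 * δ} =>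
      ‖iteratedDeriv (p + 2) (dirichletKer n) (τ i - τ j + ε.1)‖) := by
    have hcpt : IsCompact {e : ℝ | |e| ≤ 2 * δ} := by
      have : {e : ℝ | |e| ≤ 2 * δ} = Set.Icc (-(2 * δ)) (2 * δ) := by
        ext e; simp [abs_le]
      rw [this]; exact isCompact_Icc
    have hcont : ContinuousOn (fun e : ℝ =>
        ‖iteratedDeriv (p + 2) (dirichletKer n) (τ i - τ j + e)‖)
        {e : ℝ | |e| ≤ 2 * δ} :=
      (continuous_norm.comp ((hsm (p + 2)).continuous.comp
        (continuous_const.add continuous_id))).continuousOn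
    have himg := (hcpt.image_of_continuousOn hcont).bddAbove
    have : (Set.range fun ε : {e : ℝ // |e| ≤ 2 * δ} =>
        ‖iteratedDeriv (p + 2) (dirichletKer n) (τ i - τ j + ε.1)‖) =
        (fun e : ℝ => ‖iteratedDeriv (p + 2) (dirichletKer n) (τ i - τ j + e)‖) ''
          {e : ℝ | |e| ≤ 2 * δ} := by
      ext y
      constructor
      · rintro ⟨⟨e, he⟩, rfl⟩; exact ⟨e, he, rfl⟩
      · rintro ⟨e, he, rfl⟩; exact ⟨⟨e, he⟩, rfl⟩
    rwa [this]
  have hS : ∀ u : ℝ, |u| ≤ 2 * δ → ‖g (x + u)‖ ≤ S := by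
    intro u hu
    exact le_ciSup hbdd (⟨u, hu⟩ : {e : ℝ // |e| ≤ 2 * δ})
  have hS0 : 0 ≤ S := le_trans (norm_nonneg _) (hS 0 (by simp; positivity))
  -- derivative identities
  have hd1 : deriv f = f1 := (iteratedDeriv_succ).symm
  have hd2 : deriv f1 = g := by
    rw [hf1def, hgdef, ← iteratedDeriv_succ]
  -- Step A : inner mean value bound
  have stepA : ∀ t : ℝ, |t| ≤ δ → ‖f1 (x - a + t) - f1 (x + t)‖ ≤ S * |a| := by
    intro t ht
    have hsub : ∀ w ∈ Set.uIcc (x + t - a) (x + t), ‖deriv f1 w‖ ≤ S := by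
      intro w hw
      rw [hd2]
      have hw' : |w - x| ≤ 2 * δ := by
        rcases Set.mem_uIcc.mp hw with ⟨h1, h2⟩ | ⟨h1, h2⟩ <;>
        · have ht' := abs_le.mp ht
          have ha' := abs_le.mp ha
          rw [abs_le]; constructor <;> linarith
      have : g (x + (w - x)) = g w := by ring_nf
      calc ‖g w‖ = ‖g (x + (w - x))‖ := by
            rw [this]
        _ ≤ S := hS _ hw'
    have := Convex.norm_image_sub_le_of_norm_deriv_le
      (fun w _ => (hdiff (p + 1)) w) hsub (convex_uIcc _ _)
      (Set.right_mem_uIcc) (Set.left_mem_uIcc)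
      (f := f1) (s := Set.uIcc (x + t - a) (x + t))
    calc ‖f1 (x - a + t) - f1 (x + t)‖ = ‖f1 (x + t - a) - f1 (x + t)‖ := by ring_nf
      _ ≤ S * ‖(x + t - a) - (x + t)‖ := this
      _ = S * |a| := by rw [Real.norm_eq_abs]; congr 1; rw [abs_sub_comm]; congr 1; ring
  -- Step B : outer mean value bound
  set h : ℝ → ℂ := fun t => f (x - a + t) - f (x + t) with hhdef
  have hderiv : ∀ t : ℝ, HasDerivAt h (f1 (x - a + t) - f1 (x + t)) t := by
    intro t
    have h1 : HasDerivAt (fun t : ℝ => f (x - a + t)) (f1 (x - a + t)) t := by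
      have := HasDerivAt.comp_const_add (x - a) t (((hdiff p) (x - a + t)).hasDerivAt)
      rw [hd1] at this; exact this
    have h2 : HasDerivAt (fun t : ℝ => f (x + t)) (f1 (x + t)) t := by
      have := HasDerivAt.comp_const_add x t (((hdiff p) (x + t)).hasDerivAt)
      rw [hd1] at this; exact this
    exact h1.sub h2
  have hbound : ∀ t ∈ Set.uIcc (0 : ℝ) b, ‖deriv h t‖ ≤ S * |a| := by
    intro t htmem
    rw [(hderiv t).deriv]
    apply stepA
    have ht : |t| ≤ |b| := by
      rcases Set.mem_uIcc.mp htmem with ⟨h1, h2⟩ | ⟨h1, h2⟩ <;>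
        · rw [abs_le]; cases abs_nonneg b |>.lt_or_eq <;>
          · constructor <;> [linarith [neg_abs_le b, le_abs_self b];
              linarith [neg_abs_le b, le_abs_self b]]
    exact le_trans ht hb
  have hmvt := Convex.norm_image_sub_le_of_norm_deriv_le
    (fun t _ => (hderiv t).differentiableAt) hbound (convex_uIcc _ _)
    Set.left_mem_uIcc Set.right_mem_uIcc (f := h) (s := Set.uIcc (0 : ℝ) b)
  have hfin : ‖h b - h 0‖ ≤ S * |a| * |b| := by
    calc ‖h b - h 0‖ ≤ S * |a| * ‖b - 0‖ := hmvt
      _ = S * |a| * |b| := by rw [sub_zero, Real.norm_eq_abs]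
  have hent : Gmat n p τ τ' i j = h b - h 0 := by
    rw [hentry, hhdef]
    simp only [add_zero]
    ring
  rw [hent]
  have h1 : |a| * |b| ≤ δ * δ := mul_le_mul ha hb (abs_nonneg b) hδ
  calc ‖h b - h 0‖ ≤ S * |a| * |b| := hfin
    _ = S * (|a| * |b|) := by ring
    _ ≤ S * (δ * δ) := mul_le_mul_of_nonneg_left h1 hS0
    _ ≤ 4 * δ ^ 2 * S := by nlinarith [hS0, mul_nonneg hδ hδ]
end
end

section
/- Let E = V_1(τ) − V_1(τ̃) and let P be the orthogonal projection matrix onto the orthogonal complement of the column space of V_1(τ). If the wrap-around distance between τ_ℓ and τ̃_ℓ is at most δ for every ℓ, then the largest eigenvalue of the Hermitian positive semidefinite matrix M = E^H P E satisfies λ_max(M) ≤ max_i Σ_j |G_2(i,j)| ≤ 4δ² L sup_{|ε| ≤ 2δ} sup_{i,j} |D_N^{(4)}(τ_i − τ_j + ε)|. -/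
open scoped Real BigOperators
open Matrix

noncomputable section

/-! ### Auxiliary machinery -/

def Dp (n p : ℕ) (t : ℝ) : ℂ :=
  (1 / (2 * (n : ℂ) + 1)) * ∑ k ∈ Finset.Icc (-(n : ℤ)) (n : ℤ),
    (-(2 * (Real.pi : ℂ) * Complex.I * (k : ℂ))) ^ p *
      Complex.exp ((-(2 * (Real.pi : ℂ) * Complex.I * (k : ℂ))) * (t : ℂ))

lemma hasDerivAt_Dp (n p : ℕ) (t : ℝ) : HasDerivAt (Dp n p) (Dp n (p+1) t) t := by
  have h : ∀ k : ℤ, HasDerivAt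
      (fun s : ℝ => (-(2 * (Real.pi:ℂ) * Complex.I * (k:ℂ)))^p *
        Complex.exp ((-(2 * (Real.pi:ℂ) * Complex.I * (k:ℂ))) * (s:ℂ)))
      ((-(2 * (Real.pi:ℂ) * Complex.I * (k:ℂ)))^(p+1) *
        Complex.exp ((-(2 * (Real.pi:ℂ) * Complex.I * (k:ℂ))) * (t:ℂ))) t := by
    intro k
    set c : ℂ := -(2 * (Real.pi:ℂ) * Complex.I * (k:ℂ)) with hc
    have h0 : HasDerivAt (fun z : ℂ => Complex.exp (c * z)) (Complex.exp (c * t) * c) (t:ℂ) := by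
      simpa using ((hasDerivAt_id (t:ℂ)).const_mul c).cexp
    have h1 : HasDerivAt (fun s : ℝ => Complex.exp (c * (s:ℂ))) (Complex.exp (c * t) * c) t :=
      h0.comp_ofReal
    have h2 := h1.const_mul (c^p)
    convert h2 using 1
    · rfl
    ring
  have h3 : HasDerivAt (fun s : ℝ => ∑ k ∈ Finset.Icc (-(n : ℤ)) (n : ℤ),
      (-(2 * (Real.pi:ℂ) * Complex.I * (k:ℂ)))^p *
        Complex.exp ((-(2 * (Real.pi:ℂ) * Complex.I * (k:ℂ))) * (s:ℂ)))
      (∑ k ∈ Finset.Icc (-(n : ℤ)) (n : ℤ),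
      (-(2 * (Real.pi:ℂ) * Complex.I * (k:ℂ)))^(p+1) *
        Complex.exp ((-(2 * (Real.pi:ℂ) * Complex.I * (k:ℂ))) * (t:ℂ))) t :=
    HasDerivAt.fun_sum (fun k _ => h k)
  exact h3.const_mul (1 / (2 * (n : ℂ) + 1))

lemma iteratedDeriv_dirichletKer (n p : ℕ) :
    iteratedDeriv p (dirichletKer n) = Dp n p := by
  induction p with
  | zero => funext t; simp [dirichletKer, Dp, neg_mul]
  | succ p ih =>
    rw [iteratedDeriv_succ, ih]
    funext t
    exact (hasDerivAt_Dp n p t).deriv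

lemma Dp_add_int (n p : ℕ) (t : ℝ) (m : ℤ) : Dp n p (t + m) = Dp n p t := by
  unfold Dp
  congr 1
  apply Finset.sum_congr rfl
  intro k _
  congr 1
  have : (-(2 * (Real.pi : ℂ) * Complex.I * (k : ℂ))) * (((t + (m:ℝ)) : ℝ) : ℂ)
      = (-(2 * (Real.pi : ℂ) * Complex.I * (k : ℂ))) * (t : ℂ) + (-(k*m) : ℤ) * (2 * Real.pi * Complex.I) := by
    push_cast
    ring
  rw [this, Complex.exp_add, Complex.exp_int_mul_two_pi_mul_I, mul_one]

lemma Dp_neg_arg (n p : ℕ) (t : ℝ) : Dp n p (-t) = (-1:ℂ)^p * Dp n p t := by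
  have hs : ∑ k ∈ Finset.Icc (-(n : ℤ)) (n : ℤ),
      (-(2 * (Real.pi : ℂ) * Complex.I * (k : ℂ))) ^ p *
        Complex.exp ((-(2 * (Real.pi : ℂ) * Complex.I * (k : ℂ))) * (((-t : ℝ)) : ℂ))
      = ∑ k ∈ Finset.Icc (-(n : ℤ)) (n : ℤ),
      (-1:ℂ)^p * ((-(2 * (Real.pi : ℂ) * Complex.I * (k : ℂ))) ^ p *
        Complex.exp ((-(2 * (Real.pi : ℂ) * Complex.I * (k : ℂ))) * (t : ℂ))) := by
    apply Finset.sum_nbij' (i := fun k : ℤ => -k) (j := fun k : ℤ => -k)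
    · intro k hk; simp only [Finset.mem_Icc] at *; omega
    · intro k hk; simp only [Finset.mem_Icc] at *; omega
    · intro k _; ring
    · intro k _; ring
    · intro k _
      have e1 : (-(2 * (Real.pi : ℂ) * Complex.I * ((k:ℤ) : ℂ))) * (((-t : ℝ)) : ℂ)
          = (-(2 * (Real.pi : ℂ) * Complex.I * (((-k : ℤ)) : ℂ))) * (t : ℂ) := by
        push_cast; ring
      rw [e1]
      have e2 : (-(2 * (Real.pi : ℂ) * Complex.I * (((-k : ℤ)) : ℂ))) ^ p
          = (-1:ℂ)^p * (-(2 * (Real.pi : ℂ) * Complex.I * ((k:ℤ) : ℂ))) ^ p := by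
        rw [← mul_pow]; congr 1; push_cast; ring
      rw [e2, ← mul_assoc, ← mul_assoc, ← mul_pow]
      norm_num
  unfold Dp
  rw [hs, ← Finset.mul_sum]
  ring

lemma abs_Dp_le (n p : ℕ) : ∃ C : ℝ, ∀ t : ℝ, ‖Dp n p t‖ ≤ C := by
  refine ⟨∑ k ∈ Finset.Icc (-(n : ℤ)) (n : ℤ),
    ‖(-(2 * (Real.pi : ℂ) * Complex.I * (k : ℂ))) ^ p‖, fun t => ?_⟩
  unfold Dp
  rw [norm_mul]
  calc ‖1 / (2 * (n:ℂ) + 1)‖ * ‖∑ k ∈ Finset.Icc (-(n : ℤ)) (n : ℤ),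
        (-(2 * (Real.pi : ℂ) * Complex.I * (k : ℂ))) ^ p *
          Complex.exp ((-(2 * (Real.pi : ℂ) * Complex.I * (k : ℂ))) * (t : ℂ))‖
      ≤ 1 * ‖∑ k ∈ Finset.Icc (-(n : ℤ)) (n : ℤ),
        (-(2 * (Real.pi : ℂ) * Complex.I * (k : ℂ))) ^ p *
          Complex.exp ((-(2 * (Real.pi : ℂ) * Complex.I * (k : ℂ))) * (t : ℂ))‖ := by
        apply mul_le_mul_of_nonneg_right _ (norm_nonneg _)
        rw [norm_div, norm_one]
        have h1 : (1:ℝ) ≤ ‖2 * (n:ℂ) + 1‖ := by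
          have : (2 * (n:ℂ) + 1) = ((2 * n + 1 : ℕ) : ℂ) := by push_cast; ring
          rw [this, Complex.norm_natCast]
          exact_mod_cast Nat.one_le_iff_ne_zero.mpr (by omega)
        rw [div_le_one (lt_of_lt_of_le zero_lt_one h1)]
        exact h1
    _ ≤ ∑ k ∈ Finset.Icc (-(n : ℤ)) (n : ℤ),
        ‖(-(2 * (Real.pi : ℂ) * Complex.I * (k : ℂ))) ^ p‖ := by
        rw [one_mul]
        refine le_trans (norm_sum_le _ _) ?_
        apply Finset.sum_le_sum
        intro k _
        rw [norm_mul]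
        have : ‖Complex.exp ((-(2 * (Real.pi : ℂ) * Complex.I * (k : ℂ))) * (t : ℂ))‖ = 1 := by
          rw [Complex.norm_exp]
          have : ((-(2 * (Real.pi : ℂ) * Complex.I * (k : ℂ))) * (t : ℂ)).re = 0 := by
            simp [Complex.mul_re, Complex.mul_im]
          rw [this, Real.exp_zero]
        rw [this, mul_one]

lemma sum_fin_icc (n : ℕ) (g : ℤ → ℂ) :
    ∑ m : Fin (2*n+1), g ((m:ℤ) - n) = ∑ k ∈ Finset.Icc (-(n:ℤ)) (n:ℤ), g k := by
  refine Finset.sum_bij' (i := fun (m : Fin (2*n+1)) (_ : m ∈ Finset.univ) => (m:ℤ) - n)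
    (j := fun (k : ℤ) (hk : k ∈ Finset.Icc (-(n:ℤ)) (n:ℤ)) =>
      (⟨(k + n).toNat, by simp only [Finset.mem_Icc] at hk; omega⟩ : Fin (2*n+1)))
    (fun m _ => by simp only [Finset.mem_Icc]; omega)
    (fun k hk => Finset.mem_univ _)
    (fun m _ => by apply Fin.ext; simp)
    (fun k hk => by simp only [Finset.mem_Icc] at hk; simp; omega)
    (fun m _ => rfl)

lemma inner_v1 (n : ℕ) (s t : ℝ) :
    ∑ m : Fin (2*n+1), (starRingEnd ℂ) (v1 n s m) * v1 n t m = -(Dp n 2 (s - t)) := by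
  have hsq : ((1 / Real.sqrt (2*(n:ℝ)+1) : ℝ) : ℂ) * ((1 / Real.sqrt (2*(n:ℝ)+1) : ℝ) : ℂ)
      = 1 / (2*(n:ℂ)+1) := by
    rw [← Complex.ofReal_mul]
    rw [div_mul_div_comm, one_mul, Real.mul_self_sqrt (by positivity)]
    push_cast
    ring
  have key : ∀ k : ℤ,
      (starRingEnd ℂ) (((1 / Real.sqrt (2*(n:ℝ)+1) : ℝ) : ℂ) * (2*(Real.pi:ℂ)*Complex.I*(k:ℂ)) *
          Complex.exp (2*(Real.pi:ℂ)*Complex.I*(k:ℂ)*(s:ℂ))) *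
        (((1 / Real.sqrt (2*(n:ℝ)+1) : ℝ) : ℂ) * (2*(Real.pi:ℂ)*Complex.I*(k:ℂ)) *
          Complex.exp (2*(Real.pi:ℂ)*Complex.I*(k:ℂ)*(t:ℂ)))
      = -((1 / (2*(n:ℂ)+1)) * ((-(2*(Real.pi:ℂ)*Complex.I*(k:ℂ)))^2 *
          Complex.exp ((-(2*(Real.pi:ℂ)*Complex.I*(k:ℂ))) * (((s - t : ℝ)) : ℂ)))) := by
    intro k
    have hconj : (starRingEnd ℂ) (2*(Real.pi:ℂ)*Complex.I*(k:ℂ)) = -(2*(Real.pi:ℂ)*Complex.I*(k:ℂ)) := by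
      simp only [_root_.map_mul, Complex.conj_I, Complex.conj_ofReal, map_intCast, map_ofNat]
      ring
    have hconj2 : (starRingEnd ℂ) (2*(Real.pi:ℂ)*Complex.I*(k:ℂ)*(s:ℂ)) = -(2*(Real.pi:ℂ)*Complex.I*(k:ℂ)*(s:ℂ)) := by
      simp only [_root_.map_mul, Complex.conj_I, Complex.conj_ofReal, map_intCast, map_ofNat]
      ring
    rw [_root_.map_mul, _root_.map_mul, ← Complex.exp_conj, hconj2, hconj, Complex.conj_ofReal]
    have harg : -(2*(Real.pi:ℂ)*Complex.I*(k:ℂ)*(s:ℂ)) + 2*(Real.pi:ℂ)*Complex.I*(k:ℂ)*(t:ℂ)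
        = (-(2*(Real.pi:ℂ)*Complex.I*(k:ℂ))) * (((s - t : ℝ)) : ℂ) := by
      push_cast; ring
    calc ((1 / Real.sqrt (2*(n:ℝ)+1) : ℝ) : ℂ) * -(2*(Real.pi:ℂ)*Complex.I*(k:ℂ)) *
          Complex.exp (-(2*(Real.pi:ℂ)*Complex.I*(k:ℂ)*(s:ℂ))) *
        (((1 / Real.sqrt (2*(n:ℝ)+1) : ℝ) : ℂ) * (2*(Real.pi:ℂ)*Complex.I*(k:ℂ)) *
          Complex.exp (2*(Real.pi:ℂ)*Complex.I*(k:ℂ)*(t:ℂ)))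
        = (((1 / Real.sqrt (2*(n:ℝ)+1) : ℝ) : ℂ) * ((1 / Real.sqrt (2*(n:ℝ)+1) : ℝ) : ℂ)) *
          (-((-(2*(Real.pi:ℂ)*Complex.I*(k:ℂ)))^2) *
            (Complex.exp (-(2*(Real.pi:ℂ)*Complex.I*(k:ℂ)*(s:ℂ))) *
             Complex.exp (2*(Real.pi:ℂ)*Complex.I*(k:ℂ)*(t:ℂ)))) := by ring
      _ = -((1 / (2*(n:ℂ)+1)) * ((-(2*(Real.pi:ℂ)*Complex.I*(k:ℂ)))^2 *
          Complex.exp ((-(2*(Real.pi:ℂ)*Complex.I*(k:ℂ))) * (((s - t : ℝ)) : ℂ)))) := by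
          rw [hsq, ← Complex.exp_add, harg]; ring
  have : ∑ m : Fin (2*n+1), (starRingEnd ℂ) (v1 n s m) * v1 n t m
      = ∑ m : Fin (2*n+1), (fun k : ℤ => -((1 / (2*(n:ℂ)+1)) * ((-(2*(Real.pi:ℂ)*Complex.I*(k:ℂ)))^2 *
          Complex.exp ((-(2*(Real.pi:ℂ)*Complex.I*(k:ℂ))) * (((s - t : ℝ)) : ℂ))))) ((m:ℤ) - n) := by
    apply Finset.sum_congr rfl
    intro m _
    exact key ((m:ℤ) - n)
  rw [this, sum_fin_icc n (fun k : ℤ => -((1 / (2*(n:ℂ)+1)) * ((-(2*(Real.pi:ℂ)*Complex.I*(k:ℂ)))^2 *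
          Complex.exp ((-(2*(Real.pi:ℂ)*Complex.I*(k:ℂ))) * (((s - t : ℝ)) : ℂ)))))]
  unfold Dp
  rw [Finset.mul_sum, ← Finset.sum_neg_distrib]

lemma Gmat_symm (n : ℕ) {L : ℕ} (τ τ' : Fin L → ℝ) (i j : Fin L) :
    Gmat n 2 τ τ' j i = Gmat n 2 τ τ' i j := by
  have he : ∀ a b : ℝ, Dp n 2 (a - b) = Dp n 2 (b - a) := by
    intro a b
    rw [show a - b = -(b - a) by ring, Dp_neg_arg]
    norm_num
  simp only [Gmat, Matrix.of_apply, iteratedDeriv_dirichletKer]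
  rw [he (τ j) (τ i), he (τ' j) (τ i), he (τ' j) (τ' i), he (τ j) (τ' i)]
  ring

lemma EHE_entry (n L : ℕ) (τ τ' : Fin L → ℝ) (i j : Fin L) :
    ((V1mat n τ - V1mat n τ')ᴴ * (V1mat n τ - V1mat n τ')) i j = -(Gmat n 2 τ τ' i j) := by
  rw [Matrix.mul_apply]
  simp only [Matrix.conjTranspose_apply, Matrix.sub_apply, V1mat, Matrix.of_apply, star_sub,
    RCLike.star_def, sub_mul, mul_sub, Finset.sum_sub_distrib]
  rw [inner_v1, inner_v1, inner_v1, inner_v1]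
  simp only [Gmat, Matrix.of_apply, iteratedDeriv_dirichletKer]
  ring

lemma round_le_wrapDist (s t : ℝ) : |s - t - round (s - t)| ≤ wrapDist s t := by
  set x := s - t with hx
  apply le_ciInf
  intro j
  rcases eq_or_ne j (-round x) with h | h
  · subst h; push_cast; rw [sub_eq_add_neg]
  · have h1 : |x - round x| ≤ 1 / 2 := abs_sub_round x
    have hne : round x + j ≠ 0 := by omega
    have h2 : (1:ℝ) ≤ |((round x + j : ℤ) : ℝ)| := by
      rw [← Int.cast_abs]
      exact_mod_cast Int.one_le_abs hne
    have h4 := abs_add_le (x + (j:ℝ)) (((round x : ℤ):ℝ) - x)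
    have e : (x + (j:ℝ)) + (((round x : ℤ):ℝ) - x) = ((round x + j : ℤ) : ℝ) := by push_cast; ring
    rw [e, abs_sub_comm ((round x : ℤ):ℝ) x] at h4
    linarith

lemma mvt01 {F : ℝ → ℂ} {F' : ℝ → ℂ} {C : ℝ} (hF : ∀ u : ℝ, HasDerivAt F (F' u) u)
    (hC : ∀ u ∈ Set.Icc (0:ℝ) 1, ‖F' u‖ ≤ C) : ‖F 1 - F 0‖ ≤ C :=
  norm_image_sub_le_of_norm_deriv_le_segment_01'
    (fun u _ => (hF u).hasDerivWithinAt) (fun u hu => hC u (Set.Ico_subset_Icc_self hu))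

lemma hasDerivAt_Dp_affine (n p : ℕ) (a b u : ℝ) :
    HasDerivAt (fun u : ℝ => Dp n p (a + u * b)) (b • Dp n (p+1) (a + u * b)) u := by
  have h1 : HasDerivAt (fun u : ℝ => a + u * b) b u := by
    simpa using ((hasDerivAt_id u).mul_const b).const_add a
  exact (hasDerivAt_Dp n p (a + u * b)).scomp u h1

lemma double_diff_bound (n : ℕ) (x h g δ K : ℝ) (hδ : 0 ≤ δ) (hh : |h| ≤ δ) (hg : |g| ≤ δ)
    (hK : ∀ ε : ℝ, |ε| ≤ 2*δ → ‖Dp n 4 (x + ε)‖ ≤ K) :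
    ‖Dp n 2 x - Dp n 2 (x - h) + Dp n 2 (x - h - g) - Dp n 2 (x - g)‖ ≤ δ^2 * K := by
  have hK0 : 0 ≤ K := le_trans (norm_nonneg _) (hK 0 (by simp [abs_of_nonneg]; linarith))
  have houter : ‖(Dp n 2 (x + 1*(-h)) - Dp n 2 ((x - g) + 1*(-h))) -
      (Dp n 2 (x + 0*(-h)) - Dp n 2 ((x - g) + 0*(-h)))‖ ≤ |h| * (|g| * K) := by
    apply mvt01 (F := fun u => Dp n 2 (x + u*(-h)) - Dp n 2 ((x - g) + u*(-h)))
      (F' := fun u => (-h) • (Dp n 3 (x + u*(-h)) - Dp n 3 ((x - g) + u*(-h))))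
    · intro u
      have := (hasDerivAt_Dp_affine n 2 x (-h) u).sub (hasDerivAt_Dp_affine n 2 (x - g) (-h) u)
      simpa [smul_sub, Pi.sub_def] using this
    · intro u hu
      rw [norm_smul, Real.norm_eq_abs, abs_neg]
      have hinner : ‖(Dp n 3 ((x + u*(-h)) + 1*(-g)) - Dp n 3 ((x + u*(-h)) + 0*(-g)))‖ ≤ |g| * K := by
        apply mvt01 (F := fun s => Dp n 3 ((x + u*(-h)) + s*(-g)))
          (F' := fun s => (-g) • Dp n 4 ((x + u*(-h)) + s*(-g)))
        · intro s
          exact hasDerivAt_Dp_affine n 3 (x + u*(-h)) (-g) s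
        · intro s hs
          rw [norm_smul, Real.norm_eq_abs, abs_neg]
          have harg : (x + u*(-h)) + s*(-g) = x + (u*(-h) + s*(-g)) := by ring
          rw [harg]
          have heps : |u*(-h) + s*(-g)| ≤ 2*δ := by
            calc |u*(-h) + s*(-g)| ≤ |u*(-h)| + |s*(-g)| := abs_add_le _ _
              _ = |u| * |h| + |s| * |g| := by rw [abs_mul, abs_mul, abs_neg, abs_neg]
              _ ≤ 1 * δ + 1 * δ := by
                  have hu1 : |u| ≤ 1 := abs_le.mpr ⟨by linarith [hu.1], hu.2⟩
                  have hs1 : |s| ≤ 1 := abs_le.mpr ⟨by linarith [hs.1], hs.2⟩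
                  have b1 := mul_le_mul hu1 hh (abs_nonneg h) zero_le_one
                  have b2 := mul_le_mul hs1 hg (abs_nonneg g) zero_le_one
                  linarith
              _ = 2*δ := by ring
          have := hK _ heps
          exact mul_le_mul_of_nonneg_left this (abs_nonneg g)
      have e1 : (x + u*(-h)) + 1*(-g) = (x - g) + u*(-h) := by ring
      have e2 : (x + u*(-h)) + 0*(-g) = x + u*(-h) := by ring
      rw [e1, e2] at hinner
      rw [← norm_neg] at hinner
      have e3 : -(Dp n 3 ((x - g) + u*(-h)) - Dp n 3 (x + u*(-h)))
          = Dp n 3 (x + u*(-h)) - Dp n 3 ((x - g) + u*(-h)) := by ring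
      rw [e3] at hinner
      exact mul_le_mul_of_nonneg_left hinner (abs_nonneg h)
  have e0 : x + (0:ℝ)*(-h) = x := by ring
  have e0' : (x - g) + (0:ℝ)*(-h) = x - g := by ring
  have e1 : x + (1:ℝ)*(-h) = x - h := by ring
  have e1' : (x - g) + (1:ℝ)*(-h) = x - h - g := by ring
  rw [e0, e0', e1, e1'] at houter
  rw [← norm_neg] at houter
  have e4 : -((Dp n 2 (x - h) - Dp n 2 (x - h - g)) - (Dp n 2 x - Dp n 2 (x - g)))
      = Dp n 2 x - Dp n 2 (x - h) + Dp n 2 (x - h - g) - Dp n 2 (x - g) := by ring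
  rw [e4] at houter
  calc ‖_‖ ≤ |h| * (|g| * K) := houter
    _ ≤ δ * (δ * K) := by
        apply mul_le_mul hh _ (by positivity) hδ
        exact mul_le_mul_of_nonneg_right hg hK0
    _ = δ^2 * K := by ring

lemma star_dot {N : ℕ} (w : Fin N → ℂ) :
    star w ⬝ᵥ w = ((∑ m, Complex.normSq (w m) : ℝ) : ℂ) := by
  simp only [dotProduct, Pi.star_apply, Complex.ofReal_sum]
  apply Finset.sum_congr rfl
  intro m _
  rw [Complex.normSq_eq_conj_mul_self]
  rfl

lemma quad_eq {N L : ℕ} (A : Matrix (Fin N) (Fin L) ℂ) (x : Fin L → ℂ) :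
    star x ⬝ᵥ ((Aᴴ * A) *ᵥ x) = ((∑ m, Complex.normSq ((A *ᵥ x) m) : ℝ) : ℂ) := by
  rw [← star_dot (A *ᵥ x), star_mulVec, ← Matrix.mulVec_mulVec]
  rw [Matrix.dotProduct_mulVec]

lemma proj_contract {N : ℕ} (P : Matrix (Fin N) (Fin N) ℂ) (hPH : Pᴴ = P) (hPP : P * P = P)
    (v : Fin N → ℂ) : ∑ m, Complex.normSq ((P *ᵥ v) m) ≤ ∑ m, Complex.normSq (v m) := by
  have hP2 : Pᴴ * P = P := by rw [hPH, hPP]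
  have hQH : (1 - P)ᴴ = 1 - P := by rw [Matrix.conjTranspose_sub, Matrix.conjTranspose_one, hPH]
  have hQ2 : (1 - P)ᴴ * (1 - P) = 1 - P := by
    rw [hQH, Matrix.sub_mul, Matrix.mul_sub, Matrix.mul_sub, hPP]
    simp [Matrix.one_mul, Matrix.mul_one]
  have e1 : ((∑ m, Complex.normSq ((P *ᵥ v) m) : ℝ) : ℂ) = star v ⬝ᵥ (P *ᵥ v) := by
    rw [← quad_eq P v, hP2]
  have e2 : ((∑ m, Complex.normSq (((1 - P) *ᵥ v) m) : ℝ) : ℂ) = star v ⬝ᵥ ((1 - P) *ᵥ v) := by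
    rw [← quad_eq (1 - P) v, hQ2]
  have e3 : star v ⬝ᵥ (P *ᵥ v) + star v ⬝ᵥ ((1 - P) *ᵥ v) = star v ⬝ᵥ v := by
    rw [← dotProduct_add, ← Matrix.add_mulVec]
    simp
  rw [← e1, ← e2, star_dot] at e3
  have e4 : (∑ m, Complex.normSq ((P *ᵥ v) m)) + (∑ m, Complex.normSq (((1 - P) *ᵥ v) m))
      = ∑ m, Complex.normSq (v m) := by
    exact_mod_cast e3
  have e5 : 0 ≤ ∑ m, Complex.normSq (((1 - P) *ᵥ v) m) :=
    Finset.sum_nonneg fun m _ => Complex.normSq_nonneg _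
  linarith

lemma eig_le_rowsum {N L : ℕ} (E : Matrix (Fin N) (Fin L) ℂ) (P : Matrix (Fin N) (Fin N) ℂ)
    (hPH : Pᴴ = P) (hPP : P * P = P) (G : Matrix (Fin L) (Fin L) ℂ)
    (hEntry : ∀ i j, (Eᴴ * E) i j = -(G i j))
    (hGsymm : ∀ i j, ‖G j i‖ = ‖G i j‖)
    (hM : (Eᴴ * P * E).IsHermitian) (i : Fin L) :
    hM.eigenvalues i ≤ ⨆ i' : Fin L, ∑ j, ‖G i' j‖ := by
  classical
  have : Nonempty (Fin L) := ⟨i⟩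
  set x : Fin L → ℂ := ⇑(hM.eigenvectorBasis i) with hxdef
  have hMx : (Eᴴ * P * E) *ᵥ x = hM.eigenvalues i • x := hM.mulVec_eigenvectorBasis i
  have hxnorm : ∑ m, Complex.normSq (x m) = 1 := by
    have h1 : ‖hM.eigenvectorBasis i‖ = 1 := hM.eigenvectorBasis.orthonormal.1 i
    have h2 := EuclideanSpace.norm_eq (hM.eigenvectorBasis i)
    rw [h1] at h2
    have h3 : ∑ m, ‖hM.eigenvectorBasis i m‖^2 = 1 := Real.sqrt_eq_one.mp h2.symm
    rw [← h3]
    apply Finset.sum_congr rfl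
    intro m _
    rw [Complex.normSq_eq_norm_sq]
  have hfact : Eᴴ * P * E = (P * E)ᴴ * (P * E) := by
    conv_lhs => rw [← hPP]
    rw [Matrix.conjTranspose_mul, hPH]
    simp [Matrix.mul_assoc]
  have hμ : hM.eigenvalues i = ∑ m, Complex.normSq (((P * E) *ᵥ x) m) := by
    have h1 : star x ⬝ᵥ ((Eᴴ * P * E) *ᵥ x)
        = ((∑ m, Complex.normSq (((P * E) *ᵥ x) m) : ℝ) : ℂ) := by
      rw [hfact, quad_eq]
    rw [hMx] at h1
    have h2 : star x ⬝ᵥ (hM.eigenvalues i • x) = (hM.eigenvalues i : ℂ) * (star x ⬝ᵥ x) := by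
      simp only [dotProduct, Pi.smul_apply, Complex.real_smul, Finset.mul_sum]
      apply Finset.sum_congr rfl
      intro m _
      ring
    rw [h2, star_dot, hxnorm, Complex.ofReal_one, mul_one] at h1
    exact_mod_cast h1
  have hle1 : hM.eigenvalues i ≤ ∑ m, Complex.normSq ((E *ᵥ x) m) := by
    rw [hμ, ← Matrix.mulVec_mulVec]
    exact proj_contract P hPH hPP (E *ᵥ x)
  have hre : ((∑ m, Complex.normSq ((E *ᵥ x) m) : ℝ)) = (star x ⬝ᵥ ((Eᴴ * E) *ᵥ x)).re := by
    rw [quad_eq]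
    simp
  set R := ⨆ i' : Fin L, ∑ j, ‖G i' j‖ with hR
  have hrowR : ∀ i', ∑ j, ‖G i' j‖ ≤ R :=
    fun i' => le_ciSup (f := fun i' : Fin L => ∑ j, ‖G i' j‖)
      (Set.Finite.bddAbove (Set.finite_range _)) i'
  have hquad : (star x ⬝ᵥ ((Eᴴ * E) *ᵥ x)).re ≤ R := by
    have expand : star x ⬝ᵥ ((Eᴴ * E) *ᵥ x) = ∑ i', ∑ j, star (x i') * ((Eᴴ*E) i' j * x j) := by
      simp [dotProduct, Matrix.mulVec, Finset.mul_sum]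
    rw [expand, Complex.re_sum]
    have step1 : ∀ i' : Fin L, (∑ j, star (x i') * ((Eᴴ*E) i' j * x j)).re
        ≤ ∑ j, ‖G i' j‖ * (‖x i'‖ * ‖x j‖) := by
      intro i'
      rw [Complex.re_sum]
      apply Finset.sum_le_sum
      intro j _
      calc (star (x i') * ((Eᴴ*E) i' j * x j)).re
          ≤ ‖star (x i') * ((Eᴴ*E) i' j * x j)‖ := Complex.re_le_norm _
        _ = ‖G i' j‖ * (‖x i'‖ * ‖x j‖) := by
            rw [hEntry i' j]
            rw [RCLike.star_def]
            rw [show (starRingEnd ℂ) (x i') * (-G i' j * x j)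
              = -((starRingEnd ℂ) (x i') * G i' j * x j) from by ring]
            rw [norm_neg, norm_mul, norm_mul, Complex.norm_conj]
            ring
    calc ∑ i', (∑ j, star (x i') * ((Eᴴ*E) i' j * x j)).re
        ≤ ∑ i', ∑ j, ‖G i' j‖ * (‖x i'‖ * ‖x j‖) :=
          Finset.sum_le_sum fun i' _ => step1 i'
      _ ≤ ∑ i', ∑ j, ‖G i' j‖ *
            ((Complex.normSq (x i') + Complex.normSq (x j)) / 2) := by
          apply Finset.sum_le_sum; intro i' _
          apply Finset.sum_le_sum; intro j _
          apply mul_le_mul_of_nonneg_left _ (norm_nonneg _)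
          have ha := Complex.sq_norm (x i')
          have hb := Complex.sq_norm (x j)
          nlinarith [sq_nonneg (‖x i'‖ - ‖x j‖)]
      _ = ∑ i', (∑ j, ‖G i' j‖) * Complex.normSq (x i') := by
          have esplit : ∀ i' j : Fin L, ‖G i' j‖ *
              ((Complex.normSq (x i') + Complex.normSq (x j)) / 2)
              = ‖G i' j‖ * Complex.normSq (x i') / 2
                + ‖G i' j‖ * Complex.normSq (x j) / 2 := by intro i' j; ring
          simp only [esplit, Finset.sum_add_distrib]
          have hswap : ∑ i', ∑ j, ‖G i' j‖ * Complex.normSq (x j) / 2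
              = ∑ i', ∑ j, ‖G i' j‖ * Complex.normSq (x i') / 2 := by
            rw [Finset.sum_comm]
            apply Finset.sum_congr rfl; intro i' _
            apply Finset.sum_congr rfl; intro j _
            rw [hGsymm]
          rw [hswap, ← Finset.sum_add_distrib]
          apply Finset.sum_congr rfl; intro i' _
          rw [← Finset.sum_add_distrib, Finset.sum_mul]
          apply Finset.sum_congr rfl; intro j _
          ring
      _ ≤ ∑ i', R * Complex.normSq (x i') := by
          apply Finset.sum_le_sum; intro i' _
          exact mul_le_mul_of_nonneg_right (hrowR i') (Complex.normSq_nonneg _)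
      _ = R := by rw [← Finset.mul_sum, hxnorm, mul_one]
  rw [hre] at hle1
  linarith


open scoped ComplexOrder

/-- with `E = V₁(τ) − V₁(τ̃)` and `P` the orthogonal projection onto the
orthogonal complement of the column space of `V₁(τ)`, if the wrap-around distance between
`τ_ℓ` and `τ̃_ℓ` is at most `δ` for every `ℓ`, then the Hermitian PSD matrix `M = EᴴPE`
satisfies `λ_max(M) ≤ max_i ∑_j |G₂(i,j)| ≤ 4δ²L sup_{|ε|≤2δ} sup_{i,j} |D_N⁽⁴⁾(τ_i−τ_j+ε)|`. -/
theorem projected_error_gram_lambda_max_bound (n L : ℕ) (τ τ' : Fin L → ℝ)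
    (δ : ℝ) (hδ : 0 ≤ δ) (hclose : ∀ ℓ : Fin L, wrapDist (τ ℓ) (τ' ℓ) ≤ δ)
    (P : Matrix (Fin (2 * n + 1)) (Fin (2 * n + 1)) ℂ)
    (hPH : Pᴴ = P) (hPP : P * P = P) (hPV : P * V1mat n τ = 0)
    (hPfix : ∀ y : Fin (2 * n + 1) → ℂ, (V1mat n τ)ᴴ *ᵥ y = 0 → P *ᵥ y = y) :
    ((V1mat n τ - V1mat n τ')ᴴ * P * (V1mat n τ - V1mat n τ')).PosSemidef ∧
      ∀ hM : ((V1mat n τ - V1mat n τ')ᴴ * P * (V1mat n τ - V1mat n τ')).IsHermitian,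
        (⨆ i, hM.eigenvalues i) ≤
            (⨆ i : Fin L, ∑ j : Fin L, ‖Gmat n 2 τ τ' i j‖) ∧
          (⨆ i : Fin L, ∑ j : Fin L, ‖Gmat n 2 τ τ' i j‖) ≤
            4 * δ ^ 2 * L *
              ⨆ q : {e : ℝ // |e| ≤ 2 * δ} × Fin L × Fin L,
                ‖iteratedDeriv 4 (dirichletKer n) (τ q.2.1 - τ q.2.2 + q.1.1)‖ := by
  classical
  set E := V1mat n τ - V1mat n τ' with hE
  have hfact : Eᴴ * P * E = (P * E)ᴴ * (P * E) := by
    conv_lhs => rw [← hPP]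
    rw [Matrix.conjTranspose_mul, hPH]
    simp [Matrix.mul_assoc]
  constructor
  · rw [hfact]
    exact Matrix.posSemidef_conjTranspose_mul_self (P * E)
  intro hM
  constructor
  · -- λ_max ≤ max row sum
    rcases Nat.eq_zero_or_pos L with hL | hL
    · subst hL
      have h1 : (⨆ i : Fin 0, hM.eigenvalues i) = 0 := Real.iSup_of_isEmpty _
      have h2 : (⨆ i : Fin 0, ∑ j : Fin 0, ‖Gmat n 2 τ τ' i j‖) = 0 :=
        Real.iSup_of_isEmpty _
      rw [h1, h2]
    · have : Nonempty (Fin L) := ⟨⟨0, hL⟩⟩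
      apply ciSup_le
      intro i
      exact eig_le_rowsum E P hPH hPP (Gmat n 2 τ τ')
        (fun i j => EHE_entry n L τ τ' i j)
        (fun i j => by rw [Gmat_symm]) hM i
  · -- max row sum ≤ 4δ²L·S
    rcases Nat.eq_zero_or_pos L with hL | hL
    · subst hL
      have h2 : (⨆ i : Fin 0, ∑ j : Fin 0, ‖Gmat n 2 τ τ' i j‖) = 0 :=
        Real.iSup_of_isEmpty _
      rw [h2]
      have hS0 : (⨆ q : {e : ℝ // |e| ≤ 2 * δ} × Fin 0 × Fin 0,
          ‖iteratedDeriv 4 (dirichletKer n) (τ q.2.1 - τ q.2.2 + q.1.1)‖) = 0 :=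
        Real.iSup_of_isEmpty _
      rw [hS0]
      norm_num
    · have hne : Nonempty (Fin L) := ⟨⟨0, hL⟩⟩
      have hneq : Nonempty ({e : ℝ // |e| ≤ 2 * δ} × Fin L × Fin L) := by
        refine ⟨⟨⟨0, ?_⟩, Classical.arbitrary _, Classical.arbitrary _⟩⟩
        rw [abs_zero]; linarith
      set S := ⨆ q : {e : ℝ // |e| ≤ 2 * δ} × Fin L × Fin L,
        ‖iteratedDeriv 4 (dirichletKer n) (τ q.2.1 - τ q.2.2 + q.1.1)‖ with hSdef
      obtain ⟨C, hC⟩ := abs_Dp_le n 4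
      have hSbdd : BddAbove (Set.range (fun q : {e : ℝ // |e| ≤ 2 * δ} × Fin L × Fin L =>
          ‖iteratedDeriv 4 (dirichletKer n) (τ q.2.1 - τ q.2.2 + q.1.1)‖)) := by
        refine ⟨C, ?_⟩
        rintro _ ⟨q, rfl⟩
        rw [iteratedDeriv_dirichletKer]
        exact hC _
      have hSle : ∀ (ε : ℝ) (hε : |ε| ≤ 2 * δ) (i j : Fin L),
          ‖Dp n 4 (τ i - τ j + ε)‖ ≤ S := by
        intro ε hε i j
        rw [← iteratedDeriv_dirichletKer n 4]
        simpa using le_ciSup hSbdd (⟨⟨ε, hε⟩, i, j⟩ : {e : ℝ // |e| ≤ 2 * δ} × Fin L × Fin L)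
      have hS0 : 0 ≤ S := by
        have := hSle 0 (by rw [abs_zero]; linarith) (Classical.arbitrary _) (Classical.arbitrary _)
        exact le_trans (norm_nonneg _) this
      -- entrywise bound
      have hGle : ∀ i j : Fin L, ‖Gmat n 2 τ τ' i j‖ ≤ δ^2 * S := by
        intro i j
        set hi := τ i - τ' i - round (τ i - τ' i) with hhi
        set hj := τ j - τ' j - round (τ j - τ' j) with hhj
        have hhi1 : |hi| ≤ δ := le_trans (round_le_wrapDist (τ i) (τ' i)) (hclose i)
        have hhj1 : |hj| ≤ δ := le_trans (round_le_wrapDist (τ j) (τ' j)) (hclose j)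
        set x := τ i - τ j with hxd
        have eg : Gmat n 2 τ τ' i j
            = Dp n 2 x - Dp n 2 (x - hi) + Dp n 2 (x - hi - (-hj)) - Dp n 2 (x - (-hj)) := by
          simp only [Gmat, Matrix.of_apply, iteratedDeriv_dirichletKer]
          have a1 : τ' i - τ j = (x - hi) + ((-(round (τ i - τ' i)) : ℤ) : ℝ) := by
            push_cast; rw [hxd, hhi]; ring
          have a2 : τ' i - τ' j = (x - hi - (-hj)) +
              (((round (τ j - τ' j) - round (τ i - τ' i)) : ℤ) : ℝ) := by
            push_cast; rw [hxd, hhi, hhj]; ring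
          have a3 : τ i - τ' j = (x - (-hj)) + (((round (τ j - τ' j)) : ℤ) : ℝ) := by
            push_cast; rw [hxd, hhj]; ring
          rw [a1, a2, a3, Dp_add_int, Dp_add_int, Dp_add_int]
        rw [eg]
        apply double_diff_bound n x hi (-hj) δ S hδ hhi1 (by rw [abs_neg]; exact hhj1)
        intro ε hε
        exact hSle ε hε i j
      -- sum bound
      apply ciSup_le
      intro i
      calc ∑ j, ‖Gmat n 2 τ τ' i j‖ ≤ ∑ _j : Fin L, δ^2 * S :=
            Finset.sum_le_sum fun j _ => hGle i j
        _ = (L : ℝ) * (δ^2 * S) := by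
            rw [Finset.sum_const, Finset.card_univ, Fintype.card_fin, nsmul_eq_mul]
        _ ≤ 4 * δ ^ 2 * L * S := by
            nlinarith [mul_nonneg (mul_nonneg (sq_nonneg δ) (Nat.cast_nonneg (α := ℝ) L)) hS0]
end
end
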